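/- Let n ≥ 2 and i be positive integers with i < n and gcd(n, i) = 1. Then the ℂ-linear span of all products of at most 2n − 3 elements of {J_n^i, (J_nᵀ)^{n−i}} (including the empty product, the identity matrix) is a proper subspace of M_n(ℂ). -/

import Mathlib

open Matrix

/-- The `n × n` nilpotent Jordan block over `ℂ`. -/
def jordan (n : ℕ) : Matrix (Fin n) (Fin n) ℂ :=
  Matrix.of fun a b => if (a : ℕ) + 1 = (b : ℕ) then 1 else 0

/-- `L_k(S)`: the ℂ-linear span of all words in `S` of length at most `k`
(including the empty word, the identity matrix). -/
noncomputable def wordSpan (n k : ℕ) (S : Set (Matrix (Fin n) (Fin n) ℂ)) :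
    Submodule ℂ (Matrix (Fin n) (Fin n) ℂ) :=
  Submodule.span ℂ {M | ∃ w : List (Matrix (Fin n) (Fin n) ℂ),
    w.length ≤ k ∧ (∀ x ∈ w, x ∈ S) ∧ M = w.prod}

lemma jordan_pow_apply (n k : ℕ) (a b : Fin n) :
    (jordan n ^ k) a b = if (a : ℕ) + k = (b : ℕ) then 1 else 0 := by
  induction k generalizing a with
  | zero => simp [Matrix.one_apply, Fin.ext_iff, eq_comm]
  | succ k ih =>
    rw [pow_succ', Matrix.mul_apply]
    by_cases h : (a : ℕ) + 1 < n
    · have hv : ∀ c : Fin n, ((a : ℕ) + 1 = (c : ℕ)) ↔ c = ⟨(a : ℕ) + 1, h⟩ := by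
        intro c; simp [Fin.ext_iff, eq_comm]
      simp_rw [jordan, Matrix.of_apply, hv, ite_mul, one_mul, zero_mul]
      rw [Finset.sum_ite_eq' Finset.univ (⟨(a : ℕ) + 1, h⟩ : Fin n)]
      rw [if_pos (Finset.mem_univ _)]
      show (jordan n ^ k) ⟨(a : ℕ) + 1, h⟩ b = _
      rw [ih ⟨(a : ℕ) + 1, h⟩]
      simp only [Fin.val_mk]
      exact if_congr (by omega) rfl rfl
    · have h0 : ∀ c : Fin n, jordan n a c = 0 := by
        intro c
        simp only [jordan, Matrix.of_apply, ite_eq_right_iff]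
        intro hc; exact absurd (hc ▸ c.isLt) h
      simp only [h0, zero_mul, Finset.sum_const_zero]
      have : ¬ ((a : ℕ) + (k + 1) = (b : ℕ)) := by
        intro hb; exact h (by omega : (a:ℕ) + 1 < n)
      · exact (if_neg this).symm

lemma jordan_transpose_pow_apply (n k : ℕ) (a b : Fin n) :
    ((jordan n)ᵀ ^ k) a b = if (b : ℕ) + k = (a : ℕ) then 1 else 0 := by
  rw [← Matrix.transpose_pow, Matrix.transpose_apply, jordan_pow_apply]

lemma AneB (n i : ℕ) (hn : 0 < n) (hi : 0 < i) (hin : i < n) :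
    jordan n ^ i ≠ (jordan n)ᵀ ^ (n - i) := by
  intro h
  have := congrFun (congrFun h ⟨0, hn⟩) ⟨i, hin⟩
  rw [jordan_pow_apply, jordan_transpose_pow_apply] at this
  simp only [Fin.val_mk] at this
  rw [if_pos (by omega), if_neg (by omega)] at this
  exact one_ne_zero this

/-- The forced word of length `ℓ` starting at row `a`. -/
noncomputable def fword (n i : ℕ) : ℕ → ℕ → List (Matrix (Fin n) (Fin n) ℂ)
  | _, 0 => []
  | a, ℓ + 1 =>
    (if a + i < n then jordan n ^ i else (jordan n)ᵀ ^ (n - i)) ::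
      fword n i ((a + i) % n) ℓ

lemma prod_entry (n i : ℕ) (hn : 0 < n) (hi : 0 < i) (hin : i < n) :
    ∀ (w : List (Matrix (Fin n) (Fin n) ℂ)),
      (∀ x ∈ w, x = jordan n ^ i ∨ x = (jordan n)ᵀ ^ (n - i)) →
      ∀ a b : Fin n,
        w.prod a b =
          if w = fword n i (a : ℕ) w.length ∧ (b : ℕ) = ((a : ℕ) + w.length * i) % n
          then 1 else 0 := by
  intro w
  induction w with
  | nil =>
    intro _ a b
    simp [fword, Matrix.one_apply, Nat.mod_eq_of_lt a.isLt, Fin.ext_iff, eq_comm]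
  | cons x w ih =>
    intro hmem a b
    have hw : ∀ y ∈ w, y = jordan n ^ i ∨ y = (jordan n)ᵀ ^ (n - i) :=
      fun y hy => hmem y (List.mem_cons_of_mem x hy)
    have hx := hmem x List.mem_cons_self
    have hAB := AneB n i hn hi hin
    rw [List.prod_cons, Matrix.mul_apply]
    have hc0 : ((a : ℕ) + i) % n < n := Nat.mod_lt _ hn
    set c0 : Fin n := ⟨((a : ℕ) + i) % n, hc0⟩ with hc0def
    have hend : (((a : ℕ) + i) % n + w.length * i) % n
        = ((a : ℕ) + (w.length + 1) * i) % n := by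
      rw [Nat.mod_add_mod]; congr 1; ring
    rcases hx with hx | hx
    · by_cases h : (a : ℕ) + i < n
      · have hc0v : ((a : ℕ) + i) % n = (a : ℕ) + i := Nat.mod_eq_of_lt h
        have hv : ∀ c : Fin n, ((a : ℕ) + i = (c : ℕ)) ↔ c = c0 := by
          intro c; simp [Fin.ext_iff, hc0v, eq_comm, hc0def]
        rw [show ∑ c, x a c * w.prod c b = w.prod c0 b by
          subst hx
          simp_rw [jordan_pow_apply, hv, ite_mul, one_mul, zero_mul]
          rw [Finset.sum_ite_eq' Finset.univ c0]
          simp]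
        rw [ih hw c0 b]
        have hfw : fword n i (a : ℕ) (w.length + 1)
            = (jordan n ^ i) :: fword n i (((a : ℕ) + i) % n) w.length := by
          simp [fword, if_pos h]
        subst hx
        apply if_congr _ rfl rfl
        simp only [List.length_cons]
        rw [hfw]
        simp only [List.cons.injEq, true_and, hc0def, Fin.val_mk, hend]
      · have h0 : ∀ c : Fin n, x a c = 0 := by
          intro c; subst hx; rw [jordan_pow_apply]
          exact if_neg (by have := c.isLt; omega)
        simp only [h0, zero_mul, Finset.sum_const_zero]
        rw [if_neg]
        rintro ⟨hw', -⟩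
        simp only [List.length_cons] at hw'
        rw [show fword n i (a : ℕ) (w.length + 1)
            = ((jordan n)ᵀ ^ (n - i)) :: fword n i (((a : ℕ) + i) % n) w.length from by
          simp [fword, if_neg h]] at hw'
        exact hAB (hx ▸ (List.cons.injEq _ _ _ _ ▸ hw').1)
    · by_cases h : (a : ℕ) + i < n
      · have h0 : ∀ c : Fin n, x a c = 0 := by
          intro c; subst hx; rw [jordan_transpose_pow_apply]
          exact if_neg (by have := c.isLt; omega)
        simp only [h0, zero_mul, Finset.sum_const_zero]
        rw [if_neg]
        rintro ⟨hw', -⟩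
        simp only [List.length_cons] at hw'
        rw [show fword n i (a : ℕ) (w.length + 1)
            = (jordan n ^ i) :: fword n i (((a : ℕ) + i) % n) w.length from by
          simp [fword, if_pos h]] at hw'
        exact hAB ((List.cons.injEq _ _ _ _ ▸ hw').1 ▸ hx ▸ rfl)
      · have hc0v : ((a : ℕ) + i) % n = (a : ℕ) + i - n := by
          rw [Nat.mod_eq_sub_mod (by omega), Nat.mod_eq_of_lt (by have := a.isLt; omega)]
        have hv : ∀ c : Fin n, ((c : ℕ) + (n - i) = (a : ℕ)) ↔ c = c0 := by
          intro c
          have := c.isLt; have := a.isLt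
          simp only [Fin.ext_iff, hc0def, Fin.val_mk, hc0v]
          omega
        rw [show ∑ c, x a c * w.prod c b = w.prod c0 b by
          subst hx
          simp_rw [jordan_transpose_pow_apply, hv, ite_mul, one_mul, zero_mul]
          rw [Finset.sum_ite_eq' Finset.univ c0]
          simp]
        rw [ih hw c0 b]
        have hfw : fword n i (a : ℕ) (w.length + 1)
            = ((jordan n)ᵀ ^ (n - i)) :: fword n i (((a : ℕ) + i) % n) w.length := by
          simp [fword, if_neg h]
        subst hx
        apply if_congr _ rfl rfl
        simp only [List.length_cons]
        rw [hfw]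
        simp only [List.cons.injEq, true_and, hc0def, Fin.val_mk, hend]

lemma fword_congr (n i : ℕ) (hn : 0 < n) :
    ∀ (ℓ a a' : ℕ), a < n → a' < n →
      (∀ j < ℓ, ((a + j * i) % n + i < n ↔ (a' + j * i) % n + i < n)) →
      fword n i a ℓ = fword n i a' ℓ := by
  intro ℓ
  induction ℓ with
  | zero => intro a a' _ _ _; rfl
  | succ ℓ ihl =>
    intro a a' ha ha' hcond
    have h0 := hcond 0 (Nat.succ_pos ℓ)
    simp only [Nat.zero_mul, Nat.add_zero, Nat.mod_eq_of_lt ha, Nat.mod_eq_of_lt ha'] at h0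
    have e : ∀ x j : ℕ, ((x + i) % n + j * i) % n = (x + (j + 1) * i) % n := by
      intro x j; rw [Nat.mod_add_mod]; congr 1; ring
    simp only [fword]
    congr 1
    · exact if_congr h0 rfl rfl
    · apply ihl _ _ (Nat.mod_lt _ hn) (Nat.mod_lt _ hn)
      intro j hj
      rw [e a j, e a' j]
      exact hcond (j + 1) (by omega)

lemma cond_key (n i : ℕ) (hn : 2 ≤ n) (hi : 0 < i) (hin : i < n) (hco : Nat.Coprime n i) :
    ∀ j < n - 2, ((i - 1 + j * i) % n + i < n ↔ (i + j * i) % n + i < n) := by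
  intro j hj
  set r := (i - 1 + j * i) % n with hr
  have hrlt : r < n := Nat.mod_lt _ (by omega)
  have hne1 : r ≠ n - 1 := by
    intro hcontr
    have h1 : (i - 1 + j * i + 1) % n = 0 := by
      rw [← Nat.mod_add_mod, ← hr, hcontr, show n - 1 + 1 = n by omega, Nat.mod_self]
    have h2 : i - 1 + j * i + 1 = (j + 1) * i := by rw [Nat.succ_mul]; omega
    have hdvd : n ∣ j + 1 :=
      hco.dvd_of_dvd_mul_right (Nat.dvd_of_mod_eq_zero (h2 ▸ h1))
    have := Nat.le_of_dvd (by omega) hdvd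
    omega
  have hne2 : r + i + 1 ≠ n := by
    intro hcontr
    have h1 : (i - 1 + j * i + (i + 1)) % n = 0 := by
      rw [← Nat.mod_add_mod, ← hr, show r + (i + 1) = n by omega, Nat.mod_self]
    have h2 : i - 1 + j * i + (i + 1) = (j + 2) * i := by
      rw [show (j + 2) * i = j * i + i + i by ring]; omega
    have hdvd : n ∣ j + 2 :=
      hco.dvd_of_dvd_mul_right (Nat.dvd_of_mod_eq_zero (h2 ▸ h1))
    have := Nat.le_of_dvd (by omega) hdvd
    omega
  have hstep : (i + j * i) % n = r + 1 := by
    rw [show i + j * i = i - 1 + j * i + 1 by omega, ← Nat.mod_add_mod, ← hr,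
      Nat.mod_eq_of_lt (by omega : r + 1 < n)]
  rw [hstep]
  omega

lemma len1 (n i ℓ : ℕ) (hn : 2 ≤ n) (hi : 0 < i) (hin : i < n) (hco : Nat.Coprime n i)
    (hl : ℓ ≤ 2 * n - 3) :
    (i - 1 + ℓ * i) % n = n - i - 1 ↔ ℓ = n - 2 := by
  have hmul : (n - 2) * i = n * i - 2 * i := by rw [Nat.sub_mul]
  have hmul2 : n * (i - 1) = n * i - n := by
    rw [Nat.mul_sub, Nat.mul_one]
  have h3 : 2 * i ≤ n * i := Nat.mul_le_mul_right i (by omega)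
  have h4 : n ≤ n * i := Nat.le_mul_of_pos_right n hi
  constructor
  · intro h
    have h1 : (i - 1 + ℓ * i + (i + 1)) % n = 0 := by
      rw [← Nat.mod_add_mod, h, show n - i - 1 + (i + 1) = n by omega, Nat.mod_self]
    have h2 : i - 1 + ℓ * i + (i + 1) = (ℓ + 2) * i := by
      rw [show (ℓ + 2) * i = ℓ * i + i + i by ring]; omega
    have hdvd : n ∣ ℓ + 2 :=
      hco.dvd_of_dvd_mul_right (Nat.dvd_of_mod_eq_zero (h2 ▸ h1))
    obtain ⟨k, hk⟩ := hdvd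
    rcases k with _ | _ | k
    · omega
    · omega
    · have hnorm : n * (k + 1 + 1) = n * (k + 2) := by ring
      have : n * 2 ≤ n * (k + 2) := Nat.mul_le_mul_left n (by omega)
      omega
  · rintro rfl
    have key : i - 1 + (n - 2) * i = n * (i - 1) + (n - i - 1) := by omega
    rw [key, Nat.mul_add_mod, Nat.mod_eq_of_lt (by omega)]

lemma len2 (n i ℓ : ℕ) (hn : 2 ≤ n) (hi : 0 < i) (hin : i < n) (hco : Nat.Coprime n i)
    (hl : ℓ ≤ 2 * n - 3) :
    (i + ℓ * i) % n = n - i ↔ ℓ = n - 2 := by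
  have hmul : (n - 2) * i = n * i - 2 * i := by rw [Nat.sub_mul]
  have hmul2 : n * (i - 1) = n * i - n := by
    rw [Nat.mul_sub, Nat.mul_one]
  have h3 : 2 * i ≤ n * i := Nat.mul_le_mul_right i (by omega)
  have h4 : n ≤ n * i := Nat.le_mul_of_pos_right n hi
  constructor
  · intro h
    have h1 : (i + ℓ * i + i) % n = 0 := by
      rw [← Nat.mod_add_mod, h, show n - i + i = n by omega, Nat.mod_self]
    have h2 : i + ℓ * i + i = (ℓ + 2) * i := by
      rw [show (ℓ + 2) * i = ℓ * i + i + i by ring]; omega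
    have hdvd : n ∣ ℓ + 2 :=
      hco.dvd_of_dvd_mul_right (Nat.dvd_of_mod_eq_zero (h2 ▸ h1))
    obtain ⟨k, hk⟩ := hdvd
    rcases k with _ | _ | k
    · omega
    · omega
    · have hnorm : n * (k + 1 + 1) = n * (k + 2) := by ring
      have : n * 2 ≤ n * (k + 2) := Nat.mul_le_mul_left n (by omega)
      omega
  · rintro rfl
    have key : i + (n - 2) * i = n * (i - 1) + (n - i) := by omega
    rw [key, Nat.mul_add_mod, Nat.mod_eq_of_lt (by omega)]

noncomputable def entryDiff (n : ℕ) (p q p' q' : Fin n) :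
    Matrix (Fin n) (Fin n) ℂ →ₗ[ℂ] ℂ where
  toFun M := M p q - M p' q'
  map_add' M N := by simp [Matrix.add_apply]; ring
  map_smul' c M := by simp [Matrix.smul_apply]; ring

@[simp] lemma entryDiff_apply (n : ℕ) (p q p' q' : Fin n) (M : Matrix (Fin n) (Fin n) ℂ) :
    entryDiff n p q p' q' M = M p q - M p' q' := rfl

/-- For `n ≥ 2`, `0 < i < n` with `gcd(n, i) = 1`, the span of words of length at most
`2n - 3` in `{J_n^i, (J_nᵀ)^{n-i}}` is a proper subspace of `M_n(ℂ)`. -/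
theorem stmt_17 (n i : ℕ) (hn : 2 ≤ n) (hi : 0 < i) (hin : i < n)
    (hgcd : Nat.gcd n i = 1) :
    wordSpan n (2 * n - 3) {jordan n ^ i, (jordan n)ᵀ ^ (n - i)} ≠ ⊤ := by
  have hn0 : 0 < n := by omega
  have hco : Nat.Coprime n i := hgcd
  set p : Fin n := ⟨i - 1, by omega⟩ with hp
  set q : Fin n := ⟨n - i - 1, by omega⟩ with hq
  set p' : Fin n := ⟨i, hin⟩ with hp'
  set q' : Fin n := ⟨n - i, by omega⟩ with hq'
  have hword : fword n i (i - 1) (n - 2) = fword n i i (n - 2) :=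
    fword_congr n i hn0 (n - 2) (i - 1) i (by omega) hin
      (cond_key n i hn hi hin hco)
  have hker : wordSpan n (2 * n - 3) {jordan n ^ i, (jordan n)ᵀ ^ (n - i)}
      ≤ LinearMap.ker (entryDiff n p q p' q') := by
    rw [wordSpan]
    apply Submodule.span_le.mpr
    rintro M ⟨w, hlen, hmemS, rfl⟩
    have hmem : ∀ x ∈ w, x = jordan n ^ i ∨ x = (jordan n)ᵀ ^ (n - i) := by
      intro x hx
      rcases hmemS x hx with h | h
      · exact Or.inl h
      · exact Or.inr h
    simp only [SetLike.mem_coe, LinearMap.mem_ker, entryDiff_apply]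
    rw [prod_entry n i hn0 hi hin w hmem p q, prod_entry n i hn0 hi hin w hmem p' q']
    have hL1 := len1 n i w.length hn hi hin hco hlen
    have hL2 := len2 n i w.length hn hi hin hco hlen
    have hiff : (w = fword n i (p : ℕ) w.length ∧ (q : ℕ) = ((p : ℕ) + w.length * i) % n)
        ↔ (w = fword n i (p' : ℕ) w.length ∧ (q' : ℕ) = ((p' : ℕ) + w.length * i) % n) := by
      simp only [hp, hq, hp', hq', Fin.val_mk]
      constructor
      · rintro ⟨hw', hqe⟩
        have hl : w.length = n - 2 := hL1.mp hqe.symm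
        refine ⟨?_, ?_⟩
        · rw [hl] at hw' ⊢; rw [hw', hword]
        · exact (hL2.mpr hl).symm
      · rintro ⟨hw', hqe⟩
        have hl : w.length = n - 2 := hL2.mp hqe.symm
        refine ⟨?_, ?_⟩
        · rw [hl] at hw' ⊢; rw [hw', ← hword]
        · exact (hL1.mpr hl).symm
    rw [if_congr hiff rfl rfl, sub_self]
  intro htop
  have hmem' : Matrix.single p q (1 : ℂ)
      ∈ wordSpan n (2 * n - 3) {jordan n ^ i, (jordan n)ᵀ ^ (n - i)} := by
    rw [htop]; exact Submodule.mem_top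
  have h0 := hker hmem'
  rw [LinearMap.mem_ker, entryDiff_apply] at h0
  have hpp' : p ≠ p' := by
    simp only [hp, hp', Ne, Fin.ext_iff, Fin.val_mk]
    omega
  simp only [Matrix.single_apply_same,
    Matrix.single_apply_of_ne (h := (by tauto : ¬(p = p' ∧ q = q')))] at h0
  simp at h0
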